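/- Let x₁,…,x_{4k+2} ∈ ℝ≥0 with indices modulo 4k+2, k ≥ 1. For j ∈ {1,…,2k+1}, let A(j) denote the inequality Σ_{i=1}^{k} x_{j+2i−1} + Σ_{i=k+1}^{2k} x_{j+2i} ≤ Σ_{i=0}^{k} x_{j+2i} + Σ_{i=k}^{2k} x_{j+2i+1}. Then A(j) holds for at least k+1 values of j in {1,…,2k+1}. -/

import Mathlib

open Finset

attribute [local instance] Classical.propDecidable

/-- The inequality `A(j)` from the proof for wheels with `4k + 2` intervals:
`Σ_{i=1}^{k} x_{j+2i−1} + Σ_{i=k+1}^{2k} x_{j+2i} ≤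
 Σ_{i=0}^{k} x_{j+2i} + Σ_{i=k}^{2k} x_{j+2i+1}`, indices taken modulo `4k + 2`. -/
def ineqA (k : ℕ) (x : ZMod (4 * k + 2) → NNReal) (j : ℕ) : Prop :=
  (∑ i ∈ Finset.Icc 1 k, x ((j + 2 * i - 1 : ℕ) : ZMod (4 * k + 2))) +
      (∑ i ∈ Finset.Icc (k + 1) (2 * k), x ((j + 2 * i : ℕ) : ZMod (4 * k + 2))) ≤
    (∑ i ∈ Finset.Icc 0 k, x ((j + 2 * i : ℕ) : ZMod (4 * k + 2))) +
      (∑ i ∈ Finset.Icc k (2 * k), x ((j + 2 * i + 1 : ℕ) : ZMod (4 * k + 2)))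

/-- Shift a sum over an `Icc` of naturals. -/
lemma sum_Icc_shift (f : ℕ → NNReal) (a b c : ℕ) :
    ∑ i ∈ Finset.Icc (a + c) (b + c), f i = ∑ i ∈ Finset.Icc a b, f (i + c) := by
  rw [← Finset.map_add_right_Icc, Finset.sum_map]; rfl

/-- Cross inequality: `LHS(A(j+1)) ≤ RHS(A(j))`. -/
lemma cross1 (k : ℕ) (x : ZMod (4 * k + 2) → NNReal) (j : ℕ) :
    (∑ i ∈ Finset.Icc 1 k, x ((j + 1 + 2 * i - 1 : ℕ) : ZMod (4 * k + 2))) +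
        (∑ i ∈ Finset.Icc (k + 1) (2 * k), x ((j + 1 + 2 * i : ℕ) : ZMod (4 * k + 2))) ≤
      (∑ i ∈ Finset.Icc 0 k, x ((j + 2 * i : ℕ) : ZMod (4 * k + 2))) +
        (∑ i ∈ Finset.Icc k (2 * k), x ((j + 2 * i + 1 : ℕ) : ZMod (4 * k + 2))) := by
  refine add_le_add ?_ ?_
  · calc (∑ i ∈ Finset.Icc 1 k, x ((j + 1 + 2 * i - 1 : ℕ) : ZMod (4 * k + 2)))
        = ∑ i ∈ Finset.Icc 1 k, x ((j + 2 * i : ℕ) : ZMod (4 * k + 2)) := by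
          refine Finset.sum_congr rfl fun i hi => ?_
          congr 2
          omega
      _ ≤ _ := Finset.sum_le_sum_of_subset (Finset.Icc_subset_Icc_left (by omega))
  · calc (∑ i ∈ Finset.Icc (k + 1) (2 * k), x ((j + 1 + 2 * i : ℕ) : ZMod (4 * k + 2)))
        = ∑ i ∈ Finset.Icc (k + 1) (2 * k), x ((j + 2 * i + 1 : ℕ) : ZMod (4 * k + 2)) := by
          refine Finset.sum_congr rfl fun i hi => ?_
          congr 2
          omega
      _ ≤ _ := Finset.sum_le_sum_of_subset (Finset.Icc_subset_Icc_left (by omega))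

/-- Cross inequality: `LHS(A(j)) ≤ RHS(A(j+1))`. -/
lemma cross2 (k : ℕ) (hk : 1 ≤ k) (x : ZMod (4 * k + 2) → NNReal) (j : ℕ) :
    (∑ i ∈ Finset.Icc 1 k, x ((j + 2 * i - 1 : ℕ) : ZMod (4 * k + 2))) +
        (∑ i ∈ Finset.Icc (k + 1) (2 * k), x ((j + 2 * i : ℕ) : ZMod (4 * k + 2))) ≤
      (∑ i ∈ Finset.Icc 0 k, x ((j + 1 + 2 * i : ℕ) : ZMod (4 * k + 2))) +
        (∑ i ∈ Finset.Icc k (2 * k), x ((j + 1 + 2 * i + 1 : ℕ) : ZMod (4 * k + 2))) := by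
  refine add_le_add ?_ ?_
  · calc (∑ i ∈ Finset.Icc 1 k, x ((j + 2 * i - 1 : ℕ) : ZMod (4 * k + 2)))
        = ∑ i ∈ Finset.Icc 0 (k - 1), x ((j + 2 * (i + 1) - 1 : ℕ) : ZMod (4 * k + 2)) := by
          have h : Finset.Icc 1 k = Finset.Icc (0 + 1) ((k - 1) + 1) := by congr 1 <;> omega
          rw [h, sum_Icc_shift]
      _ = ∑ i ∈ Finset.Icc 0 (k - 1), x ((j + 1 + 2 * i : ℕ) : ZMod (4 * k + 2)) := by
          refine Finset.sum_congr rfl fun i hi => ?_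
          congr 2
          omega
      _ ≤ _ := Finset.sum_le_sum_of_subset (Finset.Icc_subset_Icc_right (by omega))
  · calc (∑ i ∈ Finset.Icc (k + 1) (2 * k), x ((j + 2 * i : ℕ) : ZMod (4 * k + 2)))
        = ∑ i ∈ Finset.Icc k (2 * k - 1), x ((j + 2 * (i + 1) : ℕ) : ZMod (4 * k + 2)) := by
          have h : Finset.Icc (k + 1) (2 * k) = Finset.Icc (k + 1) ((2 * k - 1) + 1) := by
            congr 1; omega
          rw [h, sum_Icc_shift]
      _ = ∑ i ∈ Finset.Icc k (2 * k - 1), x ((j + 1 + 2 * i + 1 : ℕ) : ZMod (4 * k + 2)) := by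
          refine Finset.sum_congr rfl fun i hi => ?_
          congr 2
          omega
      _ ≤ _ := Finset.sum_le_sum_of_subset (Finset.Icc_subset_Icc_right (by omega))

/-- Adjacent inequalities cannot both fail. -/
lemma adj (k : ℕ) (hk : 1 ≤ k) (x : ZMod (4 * k + 2) → NNReal) (j : ℕ) :
    ineqA k x j ∨ ineqA k x (j + 1) := by
  by_contra h
  push_neg at h
  obtain ⟨h1, h2⟩ := h
  unfold ineqA at h1 h2
  rw [not_le] at h1 h2
  have hc1 := cross1 k x j
  have hc2 := cross2 k hk x j
  exact lt_irrefl _ (((hc2.trans_lt h2).trans_le hc1).trans h1)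

/-- Periodicity: `A(2k+2)` implies `A(1)`. -/
lemma periodic (k : ℕ) (hk : 1 ≤ k) (x : ZMod (4 * k + 2) → NNReal) :
    ineqA k x (2 * k + 2) → ineqA k x 1 := by
  unfold ineqA
  intro h
  have e1 : (∑ i ∈ Finset.Icc 1 k, x ((2 * k + 2 + 2 * i - 1 : ℕ) : ZMod (4 * k + 2)))
      = ∑ i ∈ Finset.Icc (k + 1) (2 * k), x ((1 + 2 * i : ℕ) : ZMod (4 * k + 2)) := by
    have hs : Finset.Icc (k + 1) (2 * k) = Finset.Icc (1 + k) (k + k) := by congr 1 <;> omega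
    rw [hs, sum_Icc_shift]
    refine Finset.sum_congr rfl fun i hi => ?_
    congr 2
    omega
  have e2 : (∑ i ∈ Finset.Icc (k + 1) (2 * k), x ((2 * k + 2 + 2 * i : ℕ) : ZMod (4 * k + 2)))
      = ∑ i ∈ Finset.Icc 1 k, x ((1 + 2 * i - 1 : ℕ) : ZMod (4 * k + 2)) := by
    have hs : Finset.Icc (k + 1) (2 * k) = Finset.Icc (1 + k) (k + k) := by congr 1 <;> omega
    rw [hs, sum_Icc_shift]
    refine Finset.sum_congr rfl fun i hi => ?_
    congr 1
    have h1 : 2 * k + 2 + 2 * (i + k) = (4 * k + 2) + (1 + 2 * i - 1) := by omega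
    rw [h1, Nat.cast_add, ZMod.natCast_self, zero_add]
  have e3 : (∑ i ∈ Finset.Icc 0 k, x ((2 * k + 2 + 2 * i : ℕ) : ZMod (4 * k + 2)))
      = ∑ i ∈ Finset.Icc k (2 * k), x ((1 + 2 * i + 1 : ℕ) : ZMod (4 * k + 2)) := by
    have hs : Finset.Icc k (2 * k) = Finset.Icc (0 + k) (k + k) := by congr 1 <;> omega
    rw [hs, sum_Icc_shift]
    refine Finset.sum_congr rfl fun i hi => ?_
    congr 2
    omega
  have e4 : (∑ i ∈ Finset.Icc k (2 * k), x ((2 * k + 2 + 2 * i + 1 : ℕ) : ZMod (4 * k + 2)))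
      = ∑ i ∈ Finset.Icc 0 k, x ((1 + 2 * i : ℕ) : ZMod (4 * k + 2)) := by
    have hs : Finset.Icc k (2 * k) = Finset.Icc (0 + k) (k + k) := by congr 1 <;> omega
    rw [hs, sum_Icc_shift]
    refine Finset.sum_congr rfl fun i hi => ?_
    congr 1
    have h1 : 2 * k + 2 + 2 * (i + k) + 1 = (4 * k + 2) + (1 + 2 * i) := by omega
    rw [h1, Nat.cast_add, ZMod.natCast_self, zero_add]
  rw [e1, e2, e3, e4] at h
  calc _ ≤ _ := le_of_eq (add_comm _ _)
    _ ≤ _ := h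
    _ ≤ _ := le_of_eq (add_comm _ _)

/-- For nonnegative reals `x₁, …, x_{4k+2}` with indices modulo `4k + 2` and `k ≥ 1`, the
inequality `A(j)` holds for at least `k + 1` values of `j` in `{1, …, 2k + 1}`. -/
theorem stmt13 (k : ℕ) (hk : 1 ≤ k) (x : ZMod (4 * k + 2) → NNReal) :
    k + 1 ≤ ((Finset.Icc 1 (2 * k + 1)).filter fun j => ineqA k x j).card := by
  classical
  set S := (Finset.Icc 1 (2 * k + 1)).filter (fun j => ineqA k x j) with hS
  set B := (Finset.Icc 1 (2 * k + 1)).filter (fun j => ¬ ineqA k x j) with hB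
  have hcard : S.card + B.card = 2 * k + 1 := by
    rw [hS, hB, Finset.card_filter_add_card_filter_not, Nat.card_Icc]
    omega
  have hBS : B.card ≤ S.card := by
    apply Finset.card_le_card_of_injOn (fun j => if j = 2 * k + 1 then 1 else j + 1)
    · intro j hj
      beta_reduce
      rw [hB, Finset.mem_coe, Finset.mem_filter, Finset.mem_Icc] at hj
      obtain ⟨⟨hj1, hj2⟩, hjA⟩ := hj
      rw [hS, Finset.mem_coe, Finset.mem_filter, Finset.mem_Icc]
      by_cases hje : j = 2 * k + 1
      · subst hje
        rw [if_pos rfl]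
        refine ⟨⟨le_refl 1, by omega⟩, ?_⟩
        rcases adj k hk x (2 * k + 1) with h | h
        · exact absurd h hjA
        · exact periodic k hk x h
      · rw [if_neg hje]
        refine ⟨⟨by omega, by omega⟩, ?_⟩
        rcases adj k hk x j with h | h
        · exact absurd h hjA
        · exact h
    · intro a ha b hb hab
      rw [hB, Finset.mem_coe, Finset.mem_filter, Finset.mem_Icc] at ha hb
      simp only at hab
      by_cases hae : a = 2 * k + 1 <;> by_cases hbe : b = 2 * k + 1
      · omega
      · rw [if_pos hae, if_neg hbe] at hab; omega
      · rw [if_neg hae, if_pos hbe] at hab; omega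
      · rw [if_neg hae, if_neg hbe] at hab; omega
  omega
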